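/- arXiv:1810.04806 — 4 statements merged into one kernel-verified Lean document; each statement's English description precedes it below -/
import Mathlib

section
/- Let X ~ F be a positive random variable with survival function S(x)=1−F(x) and left limit S(x−). Define the backward operator (Rg)(x) = (1/S(x)) ∫_x^∞ g(t) dF(t) and the forward operator (Ag)(x) = g(x) − (Rg)(x) for g ∈ L²(F). Assume Efron–Johnstone's identity Var(g(X)) = E[ (S(X)/S(X−)) (Ag)(X)² ] holds. Then E[ (S(X)/S(X−)) (Rg)(X)² ] ≤ 4 E[ g(X)² ]. -/
open MeasureTheory Set

/-- The backward operator `R` satisfies `E[(S/S⁻)(Rg)²] ≤ 4 E[g²]`, assuming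
the Efron–Johnstone identity `Var(g(X)) = E[(S(X)/S(X−))(Ag)(X)²]`. -/
theorem stmt_3 (μ : Measure ℝ) [IsProbabilityMeasure μ] (hsupp : μ (Iic 0) = 0)
    (S Sm : ℝ → ℝ) (hS : ∀ x, S x = (μ (Ioi x)).toReal)
    (hSm : ∀ x, Sm x = (μ (Ici x)).toReal)
    (g : ℝ → ℝ) (hg : MemLp g 2 μ)
    (R A : ℝ → ℝ)
    (hR : ∀ x, R x = (1 / S x) * ∫ t in Ioi x, g t ∂μ)
    (hA : ∀ x, A x = g x - R x)
    (hEJ : ∫ x, (g x - ∫ y, g y ∂μ) ^ 2 ∂μ = ∫ x, (S x / Sm x) * A x ^ 2 ∂μ) :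
    ∫ x, (S x / Sm x) * R x ^ 2 ∂μ ≤ 4 * ∫ x, g x ^ 2 ∂μ := by
  have hg2 : Integrable (fun x => g x ^ 2) μ := hg.integrable_sq
  have hg1 : Integrable g μ := hg.integrable (by norm_num)
  have hg2nn : 0 ≤ ∫ x, g x ^ 2 ∂μ := integral_nonneg fun x => sq_nonneg _
  -- the ratio c = S/Sm lies in [0,1]
  have hc0 : ∀ x, 0 ≤ S x / Sm x := fun x => by
    rw [hS, hSm]; positivity
  have hc1 : ∀ x, S x / Sm x ≤ 1 := by
    intro x
    rw [hS, hSm]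
    rcases eq_or_ne ((μ (Ici x)).toReal) 0 with h | h
    · simp [h]
    · refine div_le_one_of_le₀ ?_ ENNReal.toReal_nonneg
      exact ENNReal.toReal_mono (measure_ne_top _ _) (measure_mono Ioi_subset_Ici_self)
  -- measurability of S, Sm, c
  have hSanti : Antitone S := by
    intro x y hxy
    rw [hS, hS]
    exact ENNReal.toReal_mono (measure_ne_top _ _) (measure_mono (Ioi_subset_Ioi hxy))
  have hSmanti : Antitone Sm := by
    intro x y hxy
    rw [hSm, hSm]
    exact ENNReal.toReal_mono (measure_ne_top _ _) (measure_mono (Ici_subset_Ici.mpr hxy))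
  have hcm : Measurable fun x => S x / Sm x :=
    hSanti.measurable.div hSmanti.measurable
  -- measurability of R
  have hgp : Integrable (fun t => max (g t) 0) μ := hg1.pos_part
  have hgn : Integrable (fun t => max (-g t) 0) μ := hg1.neg.pos_part
  have hGp : Antitone fun x => ∫ t in Ioi x, max (g t) 0 ∂μ := by
    intro x y hxy
    refine setIntegral_mono_set hgp.integrableOn ?_ ?_
    · exact Filter.Eventually.of_forall fun t => le_max_right _ _
    · exact HasSubset.Subset.eventuallyLE (Ioi_subset_Ioi hxy)
  have hGn : Antitone fun x => ∫ t in Ioi x, max (-g t) 0 ∂μ := by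
    intro x y hxy
    refine setIntegral_mono_set hgn.integrableOn ?_ ?_
    · exact Filter.Eventually.of_forall fun t => le_max_right _ _
    · exact HasSubset.Subset.eventuallyLE (Ioi_subset_Ioi hxy)
  have hGeq : (fun x => ∫ t in Ioi x, g t ∂μ)
      = fun x => (∫ t in Ioi x, max (g t) 0 ∂μ) - ∫ t in Ioi x, max (-g t) 0 ∂μ := by
    funext x
    rw [← integral_sub hgp.integrableOn hgn.integrableOn]
    congr 1
    funext t
    rcases le_total (g t) 0 with h | h
    · rw [max_eq_right h, max_eq_left (by linarith)]; ring
    · rw [max_eq_left h, max_eq_right (by linarith)]; ring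
  have hGm : Measurable fun x => ∫ t in Ioi x, g t ∂μ := by
    rw [hGeq]; exact hGp.measurable.sub hGn.measurable
  have hRm : Measurable R := by
    have : R = fun x => (1 / S x) * ∫ t in Ioi x, g t ∂μ := funext hR
    rw [this]
    exact (measurable_const.div hSanti.measurable).mul hGm
  have hAm : AEStronglyMeasurable A μ := by
    have : A = fun x => g x - R x := funext hA
    rw [this]
    exact hg.aestronglyMeasurable.sub hRm.aestronglyMeasurable
  have hAm2 : AEStronglyMeasurable (fun x => A x ^ 2) μ := by
    simpa [sq, Pi.mul_def] using hAm.mul hAm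
  -- integrability of c·g²
  have hIcg2 : Integrable (fun x => (S x / Sm x) * g x ^ 2) μ := by
    refine Integrable.bdd_mul (c := 1) hg2 hcm.aestronglyMeasurable (Filter.Eventually.of_forall fun x => ?_)
    rw [Real.norm_eq_abs, abs_of_nonneg (hc0 x)]
    exact hc1 x
  -- variance bound : ∫ (g - m)² = ∫ g² - m² ≤ ∫ g²
  set m := ∫ y, g y ∂μ with hm
  have hvar : ∫ x, (g x - m) ^ 2 ∂μ ≤ ∫ x, g x ^ 2 ∂μ := by
    have hexp : (fun x => (g x - m) ^ 2)
        = fun x => (g x ^ 2 - 2 * m * g x) + m ^ 2 := by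
      funext x; ring
    have hI1 : Integrable (fun x => 2 * m * g x) μ := hg1.const_mul _
    have hI2 : Integrable (fun x => g x ^ 2 - 2 * m * g x) μ := hg2.sub hI1
    rw [hexp, integral_add hI2 (integrable_const _), integral_sub hg2 hI1,
      integral_const_mul, integral_const]
    simp only [measure_univ, probReal_univ, ENNReal.toReal_one, smul_eq_mul, one_mul, ← hm]
    nlinarith [sq_nonneg m]
  by_cases hInt : Integrable (fun x => (S x / Sm x) * R x ^ 2) μ
  · -- integrability of c·A²
    have hIcA2 : Integrable (fun x => (S x / Sm x) * A x ^ 2) μ := by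
      refine Integrable.mono ((hIcg2.const_mul 2).add (hInt.const_mul 2))
        (hcm.aestronglyMeasurable.mul hAm2)
        (Filter.Eventually.of_forall fun x => ?_)
      have h1 : A x ^ 2 ≤ 2 * g x ^ 2 + 2 * R x ^ 2 := by
        rw [hA]; nlinarith [sq_nonneg (g x + R x)]
      have hb1 : 0 ≤ (S x / Sm x) * g x ^ 2 := mul_nonneg (hc0 x) (sq_nonneg _)
      have hb2 : 0 ≤ (S x / Sm x) * R x ^ 2 := mul_nonneg (hc0 x) (sq_nonneg _)
      simp only [Pi.add_apply]
      rw [Real.norm_eq_abs, Real.norm_eq_abs,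
        abs_of_nonneg (mul_nonneg (hc0 x) (sq_nonneg _)),
        abs_of_nonneg (by linarith : (0:ℝ) ≤ 2 * ((S x / Sm x) * g x ^ 2) + 2 * ((S x / Sm x) * R x ^ 2))]
      calc (S x / Sm x) * A x ^ 2
          ≤ (S x / Sm x) * (2 * g x ^ 2 + 2 * R x ^ 2) :=
            mul_le_mul_of_nonneg_left h1 (hc0 x)
        _ = 2 * ((S x / Sm x) * g x ^ 2) + 2 * ((S x / Sm x) * R x ^ 2) := by ring
    -- main chain
    have hsum : Integrable
        (fun x => 2 * ((S x / Sm x) * g x ^ 2) + 2 * ((S x / Sm x) * A x ^ 2)) μ :=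
      (hIcg2.const_mul 2).add (hIcA2.const_mul 2)
    have step1 : ∫ x, (S x / Sm x) * R x ^ 2 ∂μ
        ≤ ∫ x, (2 * ((S x / Sm x) * g x ^ 2) + 2 * ((S x / Sm x) * A x ^ 2)) ∂μ := by
      refine integral_mono hInt hsum fun x => ?_
      have h1 : R x ^ 2 ≤ 2 * g x ^ 2 + 2 * A x ^ 2 := by
        have : R x = g x - A x := by rw [hA]; ring
        rw [this]; nlinarith [sq_nonneg (g x + A x)]
      calc (S x / Sm x) * R x ^ 2
          ≤ (S x / Sm x) * (2 * g x ^ 2 + 2 * A x ^ 2) :=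
            mul_le_mul_of_nonneg_left h1 (hc0 x)
        _ = 2 * ((S x / Sm x) * g x ^ 2) + 2 * ((S x / Sm x) * A x ^ 2) := by ring
    have step2 : ∫ x, (2 * ((S x / Sm x) * g x ^ 2) + 2 * ((S x / Sm x) * A x ^ 2)) ∂μ
        = 2 * (∫ x, (S x / Sm x) * g x ^ 2 ∂μ) + 2 * (∫ x, (S x / Sm x) * A x ^ 2 ∂μ) := by
      rw [integral_add (hIcg2.const_mul 2) (hIcA2.const_mul 2),
        integral_const_mul, integral_const_mul]
    have step3 : ∫ x, (S x / Sm x) * g x ^ 2 ∂μ ≤ ∫ x, g x ^ 2 ∂μ := by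
      refine integral_mono hIcg2 hg2 fun x => ?_
      calc (S x / Sm x) * g x ^ 2 ≤ 1 * g x ^ 2 :=
            mul_le_mul_of_nonneg_right (hc1 x) (sq_nonneg _)
        _ = g x ^ 2 := one_mul _
    have step4 : ∫ x, (S x / Sm x) * A x ^ 2 ∂μ ≤ ∫ x, g x ^ 2 ∂μ := by
      rw [← hEJ]; exact hvar
    rw [step2] at step1
    linarith
  · rw [integral_undef hInt]
    linarith
end

section
/- Let K(x,y) = e^{−|x−y|} (the Ornstein–Uhlenbeck kernel) and let F be the exponential(1) distribution with S(x)=e^{−x}. Then the doubly transformed kernel K'(x,y) = (A₁A₂K)(x,y) equals (1/2)(1 − |x−y|) e^{−|x−y|} for all x,y > 0. -/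
open MeasureTheory Set

/- Auxiliary lemmas -/

private lemma exp2_integrableOn (a : ℝ) :
    IntegrableOn (fun t : ℝ => Real.exp (-(2 * t))) (Ioi a) := by
  simpa [neg_mul] using exp_neg_integrableOn_Ioi a (b := 2) (by norm_num)

private lemma exp1_integrableOn (a : ℝ) :
    IntegrableOn (fun t : ℝ => Real.exp (-t)) (Ioi a) := by
  simpa using exp_neg_integrableOn_Ioi a (b := 1) (by norm_num)

private lemma exp2_tendsto : Filter.Tendsto (fun t : ℝ => Real.exp (-(2 * t)))
    Filter.atTop (nhds 0) := by
  have h2 : Filter.Tendsto (fun t : ℝ => 2 * t) Filter.atTop Filter.atTop :=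
    Filter.tendsto_id.const_mul_atTop (by norm_num)
  exact Real.tendsto_exp_neg_atTop_nhds_zero.comp h2

private lemma exp2_integral (a : ℝ) :
    ∫ t in Ioi a, Real.exp (-(2 * t)) = Real.exp (-(2 * a)) / 2 := by
  have hderiv : ∀ t ∈ Ioi a, HasDerivAt (fun t : ℝ => -Real.exp (-(2 * t)) / 2)
      (Real.exp (-(2 * t))) t := by
    intro t _
    have h : HasDerivAt (fun t : ℝ => -(2 * t)) (-2) t := by
      simpa using ((hasDerivAt_id t).const_mul 2).fun_neg
    have := (h.exp.fun_neg).div_const 2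
    refine this.congr_deriv ?_
    ring
  have hcont : ContinuousWithinAt (fun t : ℝ => -Real.exp (-(2 * t)) / 2) (Ici a) a :=
    (Continuous.continuousWithinAt (by fun_prop))
  have htend : Filter.Tendsto (fun t : ℝ => -Real.exp (-(2 * t)) / 2)
      Filter.atTop (nhds 0) := by
    simpa using (exp2_tendsto.neg.div_const 2)
  have := integral_Ioi_of_hasDerivAt_of_tendsto hcont hderiv (exp2_integrableOn a) htend
  rw [this]; ring

private lemma texp2_integrableOn (a : ℝ) (ha : 0 ≤ a) :
    IntegrableOn (fun t : ℝ => t * Real.exp (-(2 * t))) (Ioi a) := by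
  refine Integrable.mono' (exp1_integrableOn a)
    (Continuous.aestronglyMeasurable (by fun_prop)) ?_
  rw [ae_restrict_iff' measurableSet_Ioi]
  filter_upwards with t ht
  have ht0 : (0:ℝ) ≤ t := le_trans ha (le_of_lt ht)
  rw [Real.norm_eq_abs, abs_of_nonneg (by positivity)]
  have h1 : t ≤ Real.exp t := le_trans (by linarith) (Real.add_one_le_exp t)
  have h2 : Real.exp t * Real.exp (-(2 * t)) = Real.exp (-t) := by
    rw [← Real.exp_add]; ring_nf
  calc t * Real.exp (-(2 * t)) ≤ Real.exp t * Real.exp (-(2 * t)) :=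
        mul_le_mul_of_nonneg_right h1 (Real.exp_pos _).le
    _ = Real.exp (-t) := h2

private lemma texp2_integral (a : ℝ) (ha : 0 ≤ a) :
    ∫ t in Ioi a, t * Real.exp (-(2 * t)) = (a / 2 + 1 / 4) * Real.exp (-(2 * a)) := by
  have hderiv : ∀ t ∈ Ioi a, HasDerivAt (fun t : ℝ => -((t / 2 + 1 / 4) * Real.exp (-(2 * t))))
      (t * Real.exp (-(2 * t))) t := by
    intro t _
    have h : HasDerivAt (fun t : ℝ => -(2 * t)) (-2) t := by
      simpa using ((hasDerivAt_id t).const_mul 2).fun_neg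
    have hl : HasDerivAt (fun t : ℝ => t / 2 + 1 / 4) (1 / 2) t := by
      simpa using ((hasDerivAt_id t).div_const 2).add_const (1/4:ℝ)
    have := (hl.mul h.exp).fun_neg
    refine this.congr_deriv ?_
    ring
  have hcont : ContinuousWithinAt (fun t : ℝ => -((t / 2 + 1 / 4) * Real.exp (-(2 * t))))
      (Ici a) a := Continuous.continuousWithinAt (by fun_prop)
  have htend : Filter.Tendsto (fun t : ℝ => -((t / 2 + 1 / 4) * Real.exp (-(2 * t))))
      Filter.atTop (nhds 0) := by
    have h2 : Filter.Tendsto (fun t : ℝ => 2 * t) Filter.atTop Filter.atTop :=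
      Filter.tendsto_id.const_mul_atTop (by norm_num)
    have hu : Filter.Tendsto (fun u : ℝ => u * Real.exp (-u)) Filter.atTop (nhds 0) := by
      simpa using Real.tendsto_pow_mul_exp_neg_atTop_nhds_zero 1
    have h3 : Filter.Tendsto (fun t : ℝ => (2 * t) * Real.exp (-(2 * t)))
        Filter.atTop (nhds 0) := hu.comp h2
    have h4 := (((h3.const_mul (1/4:ℝ)).add (exp2_tendsto.const_mul (1/4:ℝ))).neg).congr
      (f₂ := fun t : ℝ => -((t / 2 + 1 / 4) * Real.exp (-(2 * t)))) (fun t => by ring)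
    simpa using h4
  have := integral_Ioi_of_hasDerivAt_of_tendsto hcont hderiv (texp2_integrableOn a ha) htend
  rw [this]; ring

/-- The case where the fixed point `c` is below the lower limit `a`. -/
private lemma lowcase (c a : ℝ) (hca : c ≤ a) :
    ∫ t in Ioi a, Real.exp (-|t - c|) * Real.exp (-t)
      = Real.exp c * Real.exp (-(2 * a)) / 2 := by
  rw [setIntegral_congr_fun measurableSet_Ioi
    (g := fun t => Real.exp c * Real.exp (-(2 * t)))
    (fun t ht => by
      simp only [mem_Ioi] at ht
      show Real.exp (-|t - c|) * Real.exp (-t) = Real.exp c * Real.exp (-(2 * t))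
      rw [abs_of_nonneg (by linarith), ← Real.exp_add, ← Real.exp_add]
      congr 1; ring)]
  rw [integral_const_mul, exp2_integral]
  ring

/-- The case where the fixed point `c` is above the lower limit `a`. -/
private lemma midcase (c a : ℝ) (hac : a ≤ c) :
    ∫ t in Ioi a, Real.exp (-|c - t|) * Real.exp (-t)
      = (c - a + 1 / 2) * Real.exp (-c) := by
  have hunion : Ioc a c ∪ Ioi c = Ioi a := Ioc_union_Ioi_eq_Ioi hac
  have hint1 : IntegrableOn (fun t => Real.exp (-|c - t|) * Real.exp (-t)) (Ioc a c) :=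
    Continuous.integrableOn_Ioc (by fun_prop)
  have hint2 : IntegrableOn (fun t => Real.exp (-|c - t|) * Real.exp (-t)) (Ioi c) := by
    refine Integrable.mono' (exp1_integrableOn c)
      (Continuous.aestronglyMeasurable (by fun_prop)) ?_
    filter_upwards with t
    rw [Real.norm_eq_abs, abs_of_nonneg (by positivity)]
    calc Real.exp (-|c - t|) * Real.exp (-t) ≤ 1 * Real.exp (-t) :=
          mul_le_mul_of_nonneg_right (Real.exp_le_one_iff.2 (neg_nonpos.2 (abs_nonneg _)))
            (Real.exp_pos _).le
      _ = Real.exp (-t) := one_mul _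
  rw [← hunion, setIntegral_union Ioc_disjoint_Ioi_same measurableSet_Ioi hint1 hint2]
  have h1 : ∫ t in Ioc a c, Real.exp (-|c - t|) * Real.exp (-t) = (c - a) * Real.exp (-c) := by
    rw [setIntegral_congr_fun measurableSet_Ioc (g := fun _ => Real.exp (-c))
      (fun t ht => by
        simp only [mem_Ioc] at ht
        show Real.exp (-|c - t|) * Real.exp (-t) = Real.exp (-c)
        rw [abs_of_nonneg (by linarith), ← Real.exp_add]
        congr 1; ring)]
    rw [setIntegral_const, Real.volume_real_Ioc_of_le hac]
    rw [smul_eq_mul]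
  have h2 : ∫ t in Ioi c, Real.exp (-|c - t|) * Real.exp (-t) = Real.exp (-c) / 2 := by
    rw [setIntegral_congr_fun measurableSet_Ioi (g := fun t => Real.exp c * Real.exp (-(2 * t)))
      (fun t ht => by
        simp only [mem_Ioi] at ht
        show Real.exp (-|c - t|) * Real.exp (-t) = Real.exp c * Real.exp (-(2 * t))
        rw [abs_of_nonpos (by linarith), ← Real.exp_add, ← Real.exp_add]
        congr 1; ring)]
    rw [integral_const_mul, exp2_integral]
    have h3 : Real.exp c * Real.exp (-(2 * c)) = Real.exp (-c) := by
      rw [← Real.exp_add]; congr 1; ring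
    linarith
  rw [h1, h2]; ring

/-- The main computation under the assumption `y ≤ x`. -/
private lemma key (x y : ℝ) (hy : 0 < y) (hyx : y ≤ x) :
      Real.exp (-|x - y|)
        - Real.exp x * (∫ s in Ioi x, Real.exp (-|s - y|) * Real.exp (-s))
        - Real.exp y * (∫ t in Ioi y, Real.exp (-|x - t|) * Real.exp (-t))
        + Real.exp x * Real.exp y *
            (∫ s in Ioi x, ∫ t in Ioi y,
              Real.exp (-|s - t|) * Real.exp (-s) * Real.exp (-t))
        = (1 / 2) * (1 - |x - y|) * Real.exp (-|x - y|) := by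
  have hx : 0 < x := lt_of_lt_of_le hy hyx
  have hI1 : (∫ s in Ioi x, Real.exp (-|s - y|) * Real.exp (-s))
      = Real.exp y * Real.exp (-(2 * x)) / 2 := lowcase y x hyx
  have hI2 : (∫ t in Ioi y, Real.exp (-|x - t|) * Real.exp (-t))
      = (x - y + 1 / 2) * Real.exp (-x) := midcase x y hyx
  have hD : (∫ s in Ioi x, ∫ t in Ioi y,
      Real.exp (-|s - t|) * Real.exp (-s) * Real.exp (-t))
      = (x / 2 + 1 / 4) * Real.exp (-(2 * x)) + (1 / 2 - y) * (Real.exp (-(2 * x)) / 2) := by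
    have hinner : ∀ s ∈ Ioi x, (∫ t in Ioi y,
        Real.exp (-|s - t|) * Real.exp (-s) * Real.exp (-t))
        = s * Real.exp (-(2 * s)) + (1 / 2 - y) * Real.exp (-(2 * s)) := by
      intro s hs
      simp only [mem_Ioi] at hs
      have hys : y ≤ s := le_trans hyx hs.le
      have : (∫ t in Ioi y, Real.exp (-|s - t|) * Real.exp (-s) * Real.exp (-t))
          = Real.exp (-s) * ∫ t in Ioi y, Real.exp (-|s - t|) * Real.exp (-t) := by
        rw [← integral_const_mul]
        exact setIntegral_congr_fun measurableSet_Ioi (fun t _ => by ring)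
      rw [this, midcase s y hys]
      have h2 : Real.exp (-s) * Real.exp (-s) = Real.exp (-(2 * s)) := by
        rw [← Real.exp_add]; ring_nf
      linear_combination (s - y + 1 / 2) * h2
    rw [setIntegral_congr_fun measurableSet_Ioi
      (g := fun s => s * Real.exp (-(2 * s)) + (1 / 2 - y) * Real.exp (-(2 * s))) hinner]
    rw [integral_add (texp2_integrableOn x hx.le) ((exp2_integrableOn x).const_mul _),
      integral_const_mul, texp2_integral x hx.le, exp2_integral]
  rw [hI1, hI2, hD, abs_of_nonneg (by linarith)]
  have hx1 : Real.exp (-(x - y)) = Real.exp (-x) * Real.exp y := by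
    rw [← Real.exp_add]; ring_nf
  have hx2 : Real.exp (-(2 * x)) = Real.exp (-x) * Real.exp (-x) := by
    rw [← Real.exp_add]; ring_nf
  rw [hx1, hx2, Real.exp_neg]
  field_simp
  ring

/-- For the Ornstein–Uhlenbeck kernel `K(x,y) = e^{−|x−y|}` and the exponential(1)
distribution, the transformed kernel is `K'(x,y) = (1/2)(1 − |x−y|)e^{−|x−y|}`. -/
theorem stmt_7 :
    ∀ x > (0 : ℝ), ∀ y > (0 : ℝ),
      Real.exp (-|x - y|)
        - Real.exp x * (∫ s in Ioi x, Real.exp (-|s - y|) * Real.exp (-s))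
        - Real.exp y * (∫ t in Ioi y, Real.exp (-|x - t|) * Real.exp (-t))
        + Real.exp x * Real.exp y *
            (∫ s in Ioi x, ∫ t in Ioi y,
              Real.exp (-|s - t|) * Real.exp (-s) * Real.exp (-t))
        = (1 / 2) * (1 - |x - y|) * Real.exp (-|x - y|) := by
  intro x hx y hy
  rcases le_total y x with hyx | hxy
  · exact key x y hy hyx
  · -- symmetric case: use Fubini to swap the double integral
    have hswap : (∫ s in Ioi x, ∫ t in Ioi y,
        Real.exp (-|s - t|) * Real.exp (-s) * Real.exp (-t))
        = (∫ t in Ioi y, ∫ s in Ioi x,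
          Real.exp (-|t - s|) * Real.exp (-t) * Real.exp (-s)) := by
      have hint : Integrable (Function.uncurry (fun s t : ℝ =>
          Real.exp (-|s - t|) * Real.exp (-s) * Real.exp (-t)))
          ((volume.restrict (Ioi x)).prod (volume.restrict (Ioi y))) := by
        have hg : Integrable (fun p : ℝ × ℝ => Real.exp (-p.1) * Real.exp (-p.2))
            ((volume.restrict (Ioi x)).prod (volume.restrict (Ioi y))) :=
          Integrable.mul_prod (exp1_integrableOn x) (exp1_integrableOn y)
        refine Integrable.mono' hg (Continuous.aestronglyMeasurable (by fun_prop)) ?_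
        filter_upwards with p
        simp only [Function.uncurry]
        rw [Real.norm_eq_abs, abs_of_nonneg (by positivity)]
        have h1 : Real.exp (-|p.1 - p.2|) ≤ 1 :=
          Real.exp_le_one_iff.2 (neg_nonpos.2 (abs_nonneg _))
        calc Real.exp (-|p.1 - p.2|) * Real.exp (-p.1) * Real.exp (-p.2)
            ≤ 1 * Real.exp (-p.1) * Real.exp (-p.2) := by
              have := (Real.exp_pos (-p.1)).le
              have := (Real.exp_pos (-p.2)).le
              gcongr
          _ = Real.exp (-p.1) * Real.exp (-p.2) := by ring
      rw [integral_integral_swap hint]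
      refine setIntegral_congr_fun measurableSet_Ioi (fun t _ => ?_)
      refine setIntegral_congr_fun measurableSet_Ioi (fun s _ => ?_)
      rw [abs_sub_comm]; ring
    have hI1 : (∫ s in Ioi x, Real.exp (-|s - y|) * Real.exp (-s))
        = (∫ t in Ioi x, Real.exp (-|y - t|) * Real.exp (-t)) :=
      setIntegral_congr_fun measurableSet_Ioi (fun s _ => by rw [abs_sub_comm])
    have hI2 : (∫ t in Ioi y, Real.exp (-|x - t|) * Real.exp (-t))
        = (∫ s in Ioi y, Real.exp (-|s - x|) * Real.exp (-s)) :=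
      setIntegral_congr_fun measurableSet_Ioi (fun t _ => by rw [abs_sub_comm])
    have hkey := key y x hx hxy
    rw [abs_sub_comm x y, hswap, hI1, hI2]
    linarith [hkey]
end

section
/- For γ < 1, the double integral 2∫_0^∞∫_0^∞ K'(x,y)² e^{−(1−γ)(x+y)} dx dy, where K'(x,y) = (1/2)(1 − |x−y|)e^{−|x−y|}, equals (5 − 4γ + γ²)/(2(γ−3)³(γ−1)). -/
open MeasureTheory Set

section AuxLemmas

open Filter

private lemma aux_tendsto (c p₀ p₁ p₂ p₃ : ℝ) (hc : 0 < c) :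
    Tendsto (fun x : ℝ => (p₀ + p₁*x + p₂*x^2 + p₃*x^3) * Real.exp (-c*x)) atTop (nhds 0) := by
  have h : ∀ n : ℕ, Tendsto (fun x : ℝ => x^n * Real.exp (-c*x)) atTop (nhds 0) := by
    intro n
    have := tendsto_rpow_mul_exp_neg_mul_atTop_nhds_zero n c hc
    simpa [Real.rpow_natCast] using this
  have H := (((h 0).const_mul p₀).add ((h 1).const_mul p₁)).add
    (((h 2).const_mul p₂).add ((h 3).const_mul p₃))
  norm_num at H
  exact H.congr fun x => by ring

private lemma aux_integrable (c p₀ p₁ p₂ p₃ s : ℝ) (hc : 0 < c) :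
    IntegrableOn (fun x : ℝ => (p₀ + p₁*x + p₂*x^2 + p₃*x^3) * Real.exp (-c*x)) (Ioi s) := by
  have h2 : (0:ℝ) < c/2 := by linarith
  apply integrable_of_isBigO_exp_neg h2
  · exact (by fun_prop : Continuous fun x : ℝ =>
      (p₀ + p₁*x + p₂*x^2 + p₃*x^3) * Real.exp (-c*x)).continuousOn
  · have ht := aux_tendsto (c/2) p₀ p₁ p₂ p₃ h2
    have hO := ht.isBigO_one ℝ
    have h3 := hO.mul (Asymptotics.isBigO_refl (fun x : ℝ => Real.exp (-(c/2)*x)) atTop)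
    refine h3.congr (fun x => ?_) (fun x => one_mul _)
    rw [mul_assoc, ← Real.exp_add]
    congr 2
    ring

private lemma aux_E (c q₀ q₁ q₂ q₃ s : ℝ) (hc : 0 < c) :
    ∫ x in Ioi s, (c*(q₀+q₁*x+q₂*x^2+q₃*x^3) - (q₁+2*q₂*x+3*q₃*x^2)) * Real.exp (-c*x)
      = Real.exp (-c*s) * (q₀+q₁*s+q₂*s^2+q₃*s^3) := by
  have hder : ∀ x ∈ Ici s, HasDerivAt (fun x : ℝ => -(Real.exp (-c*x) * (q₀+q₁*x+q₂*x^2+q₃*x^3)))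
      ((c*(q₀+q₁*x+q₂*x^2+q₃*x^3) - (q₁+2*q₂*x+3*q₃*x^2)) * Real.exp (-c*x)) x := by
    intro x _
    have he : HasDerivAt (fun x : ℝ => Real.exp (-c*x)) (-c * Real.exp (-c*x)) x := by
      have := (hasDerivAt_id' (𝕜 := ℝ) (x := x)).const_mul (-c) |>.exp
      simpa [mul_comm] using this
    have hq : HasDerivAt (fun x : ℝ => q₀+q₁*x+q₂*x^2+q₃*x^3) (q₁+2*q₂*x+3*q₃*x^2) x := by
      have h1 := (hasDerivAt_id' (𝕜 := ℝ) (x := x)).const_mul q₁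
      have h2 := (hasDerivAt_pow 2 x).const_mul q₂
      have h3 := (hasDerivAt_pow 3 x).const_mul q₃
      have := (((h1.const_add q₀).add h2).add h3)
      refine this.congr_deriv ?_
      push_cast; ring
    have := (he.mul hq).neg
    refine this.congr_deriv ?_
    ring
  have hint : IntegrableOn (fun x : ℝ =>
      (c*(q₀+q₁*x+q₂*x^2+q₃*x^3) - (q₁+2*q₂*x+3*q₃*x^2)) * Real.exp (-c*x)) (Ioi s) := by
    have h := aux_integrable c (c*q₀ - q₁) (c*q₁ - 2*q₂) (c*q₂ - 3*q₃) (c*q₃) s hc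
    have heq : (fun x : ℝ => ((c*q₀ - q₁) + (c*q₁ - 2*q₂)*x + (c*q₂ - 3*q₃)*x^2 + (c*q₃)*x^3)
        * Real.exp (-c*x))
        = fun x : ℝ => (c*(q₀+q₁*x+q₂*x^2+q₃*x^3) - (q₁+2*q₂*x+3*q₃*x^2)) * Real.exp (-c*x) :=
      funext fun x => by ring
    rwa [heq] at h
  have htend : Tendsto (fun x : ℝ => -(Real.exp (-c*x) * (q₀+q₁*x+q₂*x^2+q₃*x^3)))
      atTop (nhds 0) := by
    have h := (aux_tendsto c q₀ q₁ q₂ q₃ hc).neg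
    rw [neg_zero] at h
    exact h.congr fun x => by ring
  have := MeasureTheory.integral_Ioi_of_hasDerivAt_of_tendsto' hder hint htend
  rw [this]; ring

private lemma aux_E' (c p₀ p₁ p₂ p₃ s : ℝ) (hc : 0 < c) :
    ∫ x in Ioi s, (p₀+p₁*x+p₂*x^2+p₃*x^3) * Real.exp (-c*x)
      = Real.exp (-c*s) * ((p₀+p₁*s+p₂*s^2+p₃*s^3)/c + (p₁+2*p₂*s+3*p₃*s^2)/c^2
          + (2*p₂+6*p₃*s)/c^3 + 6*p₃/c^4) := by
  have hc0 : c ≠ 0 := ne_of_gt hc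
  have h := aux_E c (p₀/c+p₁/c^2+2*p₂/c^3+6*p₃/c^4) (p₁/c+2*p₂/c^2+6*p₃/c^3)
    (p₂/c+3*p₃/c^2) (p₃/c) s hc
  rw [show (fun x : ℝ => (p₀+p₁*x+p₂*x^2+p₃*x^3) * Real.exp (-c*x))
      = fun x : ℝ => (c*((p₀/c+p₁/c^2+2*p₂/c^3+6*p₃/c^4)+(p₁/c+2*p₂/c^2+6*p₃/c^3)*x
          +(p₂/c+3*p₃/c^2)*x^2+(p₃/c)*x^3)
        - ((p₁/c+2*p₂/c^2+6*p₃/c^3)+2*(p₂/c+3*p₃/c^2)*x+3*(p₃/c)*x^2)) * Real.exp (-c*x)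
      from funext fun x => by field_simp; ring]
  rw [h]
  field_simp
  ring

private lemma aux_F (c p₀ p₁ p₂ a b : ℝ) (hc : c ≠ 0) :
    ∫ y in a..b, (p₀+p₁*y+p₂*y^2) * Real.exp (c*y)
      = Real.exp (c*b) * ((p₀+p₁*b+p₂*b^2)/c - (p₁+2*p₂*b)/c^2 + 2*p₂/c^3)
        - Real.exp (c*a) * ((p₀+p₁*a+p₂*a^2)/c - (p₁+2*p₂*a)/c^2 + 2*p₂/c^3) := by
  have hder : ∀ y ∈ Set.uIcc a b, HasDerivAt
      (fun y : ℝ => Real.exp (c*y) * ((p₀+p₁*y+p₂*y^2)/c - (p₁+2*p₂*y)/c^2 + 2*p₂/c^3))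
      ((p₀+p₁*y+p₂*y^2) * Real.exp (c*y)) y := by
    intro y _
    have he : HasDerivAt (fun y : ℝ => Real.exp (c*y)) (c * Real.exp (c*y)) y := by
      have := (hasDerivAt_id' (𝕜 := ℝ) (x := y)).const_mul c |>.exp
      simpa [mul_comm] using this
    have hq : HasDerivAt (fun y : ℝ => (p₀+p₁*y+p₂*y^2)/c - (p₁+2*p₂*y)/c^2 + 2*p₂/c^3)
        ((p₁+2*p₂*y)/c - 2*p₂/c^2) y := by
      have h1 := ((hasDerivAt_id' (𝕜 := ℝ) (x := y)).const_mul p₁).const_add p₀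
      have h2 := (hasDerivAt_pow 2 y).const_mul p₂
      have h3 := ((h1.add h2).div_const c)
      have h4 := ((hasDerivAt_id' (𝕜 := ℝ) (x := y)).const_mul (2*p₂)).const_add p₁
        |>.div_const (c^2)
      have := (h3.sub h4).add_const (2*p₂/c^3)
      refine this.congr_deriv ?_
      push_cast; ring
    have := he.mul hq
    refine this.congr_deriv ?_
    field_simp
    ring
  have hcont : Continuous fun y : ℝ => (p₀+p₁*y+p₂*y^2) * Real.exp (c*y) := by fun_prop
  rw [intervalIntegral.integral_eq_sub_of_hasDerivAt hder (hcont.intervalIntegrable a b)]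

private lemma aux_F0 (p₀ p₁ p₂ a b : ℝ) :
    ∫ y in a..b, (p₀+p₁*y+p₂*y^2)
      = (p₀*b+p₁*b^2/2+p₂*b^3/3) - (p₀*a+p₁*a^2/2+p₂*a^3/3) := by
  have hder : ∀ y ∈ Set.uIcc a b, HasDerivAt
      (fun y : ℝ => p₀*y+p₁*y^2/2+p₂*y^3/3) (p₀+p₁*y+p₂*y^2) y := by
    intro y _
    have h1 := (hasDerivAt_id' (𝕜 := ℝ) (x := y)).const_mul p₀
    have h2 := ((hasDerivAt_pow 2 y).const_mul p₁).div_const 2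
    have h3 := ((hasDerivAt_pow 3 y).const_mul p₂).div_const 3
    have := (h1.add h2).add h3
    refine this.congr_deriv ?_
    push_cast; ring
  have hcont : Continuous fun y : ℝ => p₀+p₁*y+p₂*y^2 := by fun_prop
  rw [intervalIntegral.integral_eq_sub_of_hasDerivAt hder (hcont.intervalIntegrable a b)]

private lemma inner_eval_gen (γ x : ℝ) (hγ : γ < 1) (hc : (1:ℝ)+γ ≠ 0) (hx : 0 < x) :
    (∫ y in Ioi (0 : ℝ),
        ((1 / 2) * (1 - |x - y|) * Real.exp (-|x - y|)) ^ 2 * Real.exp (-(1 - γ) * (x + y)))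
      = ((1/4)*((1/(1+γ) - 2/(1+γ)^2 + 2/(1+γ)^3) + (1/(3-γ) - 2/(3-γ)^2 + 2/(3-γ)^3))
            + 0*x + 0*x^2 + 0*x^3) * Real.exp (-(2-2*γ)*x)
        - ((1/4)*(1/(1+γ) - 2/(1+γ)^2 + 2/(1+γ)^3) + ((1/4)*(-2/(1+γ) + 2/(1+γ)^2))*x
            + ((1/4)*(1/(1+γ)))*x^2 + 0*x^3) * Real.exp (-(3-γ)*x) := by
  have hb : (0:ℝ) < 3 - γ := by linarith
  have hb0 : (3:ℝ) - γ ≠ 0 := ne_of_gt hb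
  have heqIoi : EqOn
      (fun y : ℝ => ((1 / 2) * (1 - |x - y|) * Real.exp (-|x - y|)) ^ 2
        * Real.exp (-(1 - γ) * (x + y)))
      (fun y : ℝ => Real.exp ((1+γ)*x) *
        (((1/4)*(1+x)^2 + (-((1/2)*(1+x)))*y + (1/4)*y^2 + 0*y^3) * Real.exp (-(3-γ)*y)))
      (Ioi x) := by
    intro y hy
    have hy' : x < y := hy
    have h1 : |x - y| = y - x := by
      rw [abs_sub_comm]; exact abs_of_nonneg (by linarith)
    dsimp only
    rw [h1]
    calc ((1 / 2) * (1 - (y-x)) * Real.exp (-(y-x))) ^ 2 * Real.exp (-(1 - γ) * (x + y))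
        = ((1/2)*(1-(y-x)))^2 * Real.exp (-(y-x) + (-(y-x) + -(1 - γ) * (x + y))) := by
          rw [Real.exp_add, Real.exp_add]; ring
      _ = ((1/2)*(1-(y-x)))^2 * Real.exp ((1+γ)*x + -(3-γ)*y) := by
          rw [show -(y-x) + (-(y-x) + -(1 - γ) * (x + y)) = (1+γ)*x + -(3-γ)*y from by ring]
      _ = _ := by rw [Real.exp_add]; ring
  have heqIoc : EqOn
      (fun y : ℝ => ((1 / 2) * (1 - |x - y|) * Real.exp (-|x - y|)) ^ 2
        * Real.exp (-(1 - γ) * (x + y)))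
      (fun y : ℝ => Real.exp (-(3-γ)*x) *
        (((1/4)*(1-x)^2 + ((1/2)*(1-x))*y + (1/4)*y^2) * Real.exp ((1+γ)*y)))
      (Ioc 0 x) := by
    intro y hy
    have hy' : y ≤ x := hy.2
    have h1 : |x - y| = x - y := abs_of_nonneg (by linarith)
    dsimp only
    rw [h1]
    calc ((1 / 2) * (1 - (x-y)) * Real.exp (-(x-y))) ^ 2 * Real.exp (-(1 - γ) * (x + y))
        = ((1/2)*(1-(x-y)))^2 * Real.exp (-(x-y) + (-(x-y) + -(1 - γ) * (x + y))) := by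
          rw [Real.exp_add, Real.exp_add]; ring
      _ = ((1/2)*(1-(x-y)))^2 * Real.exp (-(3-γ)*x + (1+γ)*y) := by
          rw [show -(x-y) + (-(x-y) + -(1 - γ) * (x + y)) = -(3-γ)*x + (1+γ)*y from by ring]
      _ = _ := by rw [Real.exp_add]; ring
  have hcont : Continuous fun y : ℝ =>
      ((1 / 2) * (1 - |x - y|) * Real.exp (-|x - y|)) ^ 2 * Real.exp (-(1 - γ) * (x + y)) := by
    fun_prop
  have hIoc : IntegrableOn (fun y : ℝ =>
      ((1 / 2) * (1 - |x - y|) * Real.exp (-|x - y|)) ^ 2 * Real.exp (-(1 - γ) * (x + y)))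
      (Ioc 0 x) := hcont.integrableOn_Ioc
  have hIoi : IntegrableOn (fun y : ℝ =>
      ((1 / 2) * (1 - |x - y|) * Real.exp (-|x - y|)) ^ 2 * Real.exp (-(1 - γ) * (x + y)))
      (Ioi x) := by
    have h := (aux_integrable (3-γ) ((1/4)*(1+x)^2) (-((1/2)*(1+x))) (1/4) 0 x hb).const_mul
      (Real.exp ((1+γ)*x))
    exact MeasureTheory.IntegrableOn.congr_fun h heqIoi.symm measurableSet_Ioi
  rw [← Ioc_union_Ioi_eq_Ioi hx.le,
    setIntegral_union Ioc_disjoint_Ioi_same measurableSet_Ioi hIoc hIoi,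
    setIntegral_congr_fun measurableSet_Ioi heqIoi,
    setIntegral_congr_fun measurableSet_Ioc heqIoc,
    MeasureTheory.integral_const_mul, MeasureTheory.integral_const_mul,
    ← intervalIntegral.integral_of_le hx.le,
    aux_F (1+γ) ((1/4)*(1-x)^2) ((1/2)*(1-x)) (1/4) 0 x hc,
    aux_E' (3-γ) ((1/4)*(1+x)^2) (-((1/2)*(1+x))) (1/4) 0 x hb]
  rw [show (1+γ)*(0:ℝ) = 0 from mul_zero _, Real.exp_zero,
    show Real.exp (-(2-2*γ)*x) = Real.exp (-(3-γ)*x) * Real.exp ((1+γ)*x) from by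
      rw [← Real.exp_add]; exact congrArg Real.exp (by ring)]
  field_simp
  ring

private lemma inner_eval_neg1 (x : ℝ) (hx : 0 < x) :
    (∫ y in Ioi (0 : ℝ),
        ((1 / 2) * (1 - |x - y|) * Real.exp (-|x - y|)) ^ 2
          * Real.exp (-(1 - (-1:ℝ)) * (x + y)))
      = (5/128 + (1/4)*x + (-(1/4))*x^2 + (1/12)*x^3) * Real.exp (-4*x) := by
  have heqIoi : EqOn
      (fun y : ℝ => ((1 / 2) * (1 - |x - y|) * Real.exp (-|x - y|)) ^ 2
        * Real.exp (-(1 - (-1:ℝ)) * (x + y)))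
      (fun y : ℝ => ((1/4)*(1+x)^2 + (-((1/2)*(1+x)))*y + (1/4)*y^2 + 0*y^3)
        * Real.exp (-4*y)) (Ioi x) := by
    intro y hy
    have hy' : x < y := hy
    have h1 : |x - y| = y - x := by
      rw [abs_sub_comm]; exact abs_of_nonneg (by linarith)
    dsimp only
    rw [h1]
    calc ((1 / 2) * (1 - (y-x)) * Real.exp (-(y-x))) ^ 2 * Real.exp (-(1 - (-1:ℝ)) * (x + y))
        = ((1/2)*(1-(y-x)))^2 * Real.exp (-(y-x) + (-(y-x) + -(1 - (-1:ℝ)) * (x + y))) := by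
          rw [Real.exp_add, Real.exp_add]; ring
      _ = ((1/2)*(1-(y-x)))^2 * Real.exp (-4*y) := by
          rw [show -(y-x) + (-(y-x) + -(1 - (-1:ℝ)) * (x + y)) = -4*y from by ring]
      _ = _ := by ring
  have heqIoc : EqOn
      (fun y : ℝ => ((1 / 2) * (1 - |x - y|) * Real.exp (-|x - y|)) ^ 2
        * Real.exp (-(1 - (-1:ℝ)) * (x + y)))
      (fun y : ℝ => Real.exp (-4*x) * ((1/4)*(1-x)^2 + ((1/2)*(1-x))*y + (1/4)*y^2))
      (Ioc 0 x) := by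
    intro y hy
    have hy' : y ≤ x := hy.2
    have h1 : |x - y| = x - y := abs_of_nonneg (by linarith)
    dsimp only
    rw [h1]
    calc ((1 / 2) * (1 - (x-y)) * Real.exp (-(x-y))) ^ 2 * Real.exp (-(1 - (-1:ℝ)) * (x + y))
        = ((1/2)*(1-(x-y)))^2 * Real.exp (-(x-y) + (-(x-y) + -(1 - (-1:ℝ)) * (x + y))) := by
          rw [Real.exp_add, Real.exp_add]; ring
      _ = ((1/2)*(1-(x-y)))^2 * Real.exp (-4*x) := by
          rw [show -(x-y) + (-(x-y) + -(1 - (-1:ℝ)) * (x + y)) = -4*x from by ring]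
      _ = _ := by ring
  have hcont : Continuous fun y : ℝ =>
      ((1 / 2) * (1 - |x - y|) * Real.exp (-|x - y|)) ^ 2
        * Real.exp (-(1 - (-1:ℝ)) * (x + y)) := by fun_prop
  have hIoc : IntegrableOn (fun y : ℝ =>
      ((1 / 2) * (1 - |x - y|) * Real.exp (-|x - y|)) ^ 2
        * Real.exp (-(1 - (-1:ℝ)) * (x + y))) (Ioc 0 x) := hcont.integrableOn_Ioc
  have hIoi : IntegrableOn (fun y : ℝ =>
      ((1 / 2) * (1 - |x - y|) * Real.exp (-|x - y|)) ^ 2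
        * Real.exp (-(1 - (-1:ℝ)) * (x + y))) (Ioi x) := by
    have h := aux_integrable 4 ((1/4)*(1+x)^2) (-((1/2)*(1+x))) (1/4) 0 x (by norm_num)
    exact MeasureTheory.IntegrableOn.congr_fun h heqIoi.symm measurableSet_Ioi
  rw [← Ioc_union_Ioi_eq_Ioi hx.le,
    setIntegral_union Ioc_disjoint_Ioi_same measurableSet_Ioi hIoc hIoi,
    setIntegral_congr_fun measurableSet_Ioi heqIoi,
    setIntegral_congr_fun measurableSet_Ioc heqIoc,
    MeasureTheory.integral_const_mul,
    ← intervalIntegral.integral_of_le hx.le,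
    aux_F0 ((1/4)*(1-x)^2) ((1/2)*(1-x)) (1/4) 0 x,
    aux_E' 4 ((1/4)*(1+x)^2) (-((1/2)*(1+x))) (1/4) 0 x (by norm_num)]
  ring

end AuxLemmas

/-- The asymptotic variance of the rescaled MMD statistic for the transformed
Ornstein–Uhlenbeck kernel. -/
theorem stmt_8 (γ : ℝ) (hγ : γ < 1) :
    2 * ∫ x in Ioi (0 : ℝ), ∫ y in Ioi (0 : ℝ),
        ((1 / 2) * (1 - |x - y|) * Real.exp (-|x - y|)) ^ 2 *
          Real.exp (-(1 - γ) * (x + y))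
      = (5 - 4 * γ + γ ^ 2) / (2 * (γ - 3) ^ 3 * (γ - 1)) := by
  rcases eq_or_ne γ (-1) with hg | hg
  · subst hg
    have key : EqOn
        (fun x : ℝ => ∫ y in Ioi (0 : ℝ),
          ((1 / 2) * (1 - |x - y|) * Real.exp (-|x - y|)) ^ 2
            * Real.exp (-(1 - (-1:ℝ)) * (x + y)))
        (fun x : ℝ => (5/128 + (1/4)*x + (-(1/4))*x^2 + (1/12)*x^3) * Real.exp (-4*x))
        (Ioi 0) := fun x hx => inner_eval_neg1 x hx
    rw [setIntegral_congr_fun measurableSet_Ioi key,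
      aux_E' 4 (5/128) (1/4) (-(1/4)) (1/12) 0 (by norm_num)]
    norm_num
  · have hc : (1:ℝ) + γ ≠ 0 := fun h => hg (by linarith)
    have ha : (0:ℝ) < 2 - 2*γ := by linarith
    have hb : (0:ℝ) < 3 - γ := by linarith
    have key : EqOn
        (fun x : ℝ => ∫ y in Ioi (0 : ℝ),
          ((1 / 2) * (1 - |x - y|) * Real.exp (-|x - y|)) ^ 2
            * Real.exp (-(1 - γ) * (x + y)))
        (fun x : ℝ =>
          ((1/4)*((1/(1+γ) - 2/(1+γ)^2 + 2/(1+γ)^3) + (1/(3-γ) - 2/(3-γ)^2 + 2/(3-γ)^3))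
              + 0*x + 0*x^2 + 0*x^3) * Real.exp (-(2-2*γ)*x)
            - ((1/4)*(1/(1+γ) - 2/(1+γ)^2 + 2/(1+γ)^3) + ((1/4)*(-2/(1+γ) + 2/(1+γ)^2))*x
              + ((1/4)*(1/(1+γ)))*x^2 + 0*x^3) * Real.exp (-(3-γ)*x))
        (Ioi 0) := fun x hx => inner_eval_gen γ x hγ hc hx
    rw [setIntegral_congr_fun measurableSet_Ioi key,
      MeasureTheory.integral_sub
        (aux_integrable (2-2*γ)
          ((1/4)*((1/(1+γ) - 2/(1+γ)^2 + 2/(1+γ)^3) + (1/(3-γ) - 2/(3-γ)^2 + 2/(3-γ)^3)))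
          0 0 0 0 ha)
        (aux_integrable (3-γ)
          ((1/4)*(1/(1+γ) - 2/(1+γ)^2 + 2/(1+γ)^3)) ((1/4)*(-2/(1+γ) + 2/(1+γ)^2))
          ((1/4)*(1/(1+γ))) 0 0 hb),
      aux_E' (2-2*γ)
        ((1/4)*((1/(1+γ) - 2/(1+γ)^2 + 2/(1+γ)^3) + (1/(3-γ) - 2/(3-γ)^2 + 2/(3-γ)^3)))
        0 0 0 0 ha,
      aux_E' (3-γ)
        ((1/4)*(1/(1+γ) - 2/(1+γ)^2 + 2/(1+γ)^3)) ((1/4)*(-2/(1+γ) + 2/(1+γ)^2))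
        ((1/4)*(1/(1+γ))) 0 0 hb]
    have ha0 : (2:ℝ) - 2*γ ≠ 0 := ne_of_gt ha
    have hb0 : (3:ℝ) - γ ≠ 0 := ne_of_gt hb
    have h3 : γ - 3 ≠ 0 := by intro h; apply hb0; linarith
    have h1 : γ - 1 ≠ 0 := by intro h; apply ha0; linarith
    have h1' : (1:ℝ) - γ ≠ 0 := by intro h; apply ha0; linarith
    simp only [mul_zero, neg_zero, Real.exp_zero, zero_mul, add_zero, mul_one]
    field_simp
    ring
end

section
/- Let F, G be probability distributions on (0,∞), S = 1−F, H defined by 1−H(x) = (1−G(x))S(x), and K a symmetric kernel with ∫∫ K(x,y)²/((1−G(x−))(1−G(y−))) dF(x)dF(y) < ∞. Let R₁ be the backward operator applied to the first coordinate: (R₁K)(x,y) = (1/S(x))∫_x^∞ K(s,y)dF(s). Assuming the bound E[(S(X)/S(X−))(Rg)(X)²] ≤ 4E[g(X)²] for all g ∈ L²(F), it holds that ∫∫ (R₁K)(x,y)² S(x) / ((1−H(x−))(1−G(y−))) dF(x)dF(y) ≤ 4 ∫∫ K(x,y)²/((1−G(x−))(1−G(y−))) dF(x)dF(y) < ∞.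 -/
open MeasureTheory Set

open Filter

lemma aux_meas_int (μ : Measure ℝ) [SFinite μ] {h : ℝ → ℝ} (hh : Measurable h) :
    Measurable fun x => ∫ s in Ioi x, h s ∂μ := by
  have hF : Measurable fun p : ℝ × ℝ => if p.1 < p.2 then h p.2 else 0 :=
    Measurable.ite (measurableSet_lt measurable_fst measurable_snd)
      (hh.comp measurable_snd) measurable_const
  have := (hF.stronglyMeasurable.integral_prod_right' (ν := μ)).measurable
  convert this using 1
  funext x
  rw [← integral_indicator measurableSet_Ioi]
  congr 1

lemma aux_meas_int2 (μ : Measure ℝ) [SFinite μ] {K : ℝ → ℝ → ℝ}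
    (hK : Measurable fun p : ℝ × ℝ => K p.1 p.2) :
    Measurable fun p : ℝ × ℝ => ∫ s in Ioi p.1, K s p.2 ∂μ := by
  have hF : Measurable fun q : (ℝ × ℝ) × ℝ => if q.1.1 < q.2 then K q.2 q.1.2 else 0 := by
    refine Measurable.ite
      (measurableSet_lt (measurable_fst.comp measurable_fst) measurable_snd) ?_ measurable_const
    exact hK.comp (measurable_snd.prodMk (measurable_snd.comp measurable_fst))
  have := (hF.stronglyMeasurable.integral_prod_right' (ν := μ)).measurable
  convert this using 1
  funext p
  rw [← integral_indicator measurableSet_Ioi]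
  congr 1
lemma aux_div_le_div {a b c : ℝ} (h : a ≤ b) (hc : 0 ≤ c) : a / c ≤ b / c := by gcongr
lemma trunc_bound (μ : Measure ℝ) [IsProbabilityMeasure μ] (S Sm : ℝ → ℝ)
    (hS : ∀ x, S x = (μ (Ioi x)).toReal) (hSm : ∀ x, Sm x = (μ (Ici x)).toReal)
    (hR : ∀ g : ℝ → ℝ, MemLp g 2 μ →
      ∫ x, (S x / Sm x) * ((1 / S x) * ∫ s in Ioi x, g s ∂μ) ^ 2 ∂μ ≤ 4 * ∫ x, g x ^ 2 ∂μ)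
    (g : ℝ → ℝ) (hg : Measurable g) (hg0 : ∀ s, 0 ≤ g s)
    (hg2 : Integrable (fun s => g s ^ 2) μ) :
    ∫⁻ x, ENNReal.ofReal ((S x / Sm x) * ((1 / S x) * ∫ s in Ioi x, g s ∂μ) ^ 2) ∂μ
      ≤ ENNReal.ofReal (4 * ∫ s, g s ^ 2 ∂μ) := by
  -- basic facts about S, Sm
  have hS0 : ∀ x, 0 ≤ S x := fun x => by rw [hS]; exact ENNReal.toReal_nonneg
  have hSm0 : ∀ x, 0 ≤ Sm x := fun x => by rw [hSm]; exact ENNReal.toReal_nonneg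
  have hSle : ∀ x, S x ≤ Sm x := fun x => by
    rw [hS, hSm]
    exact ENNReal.toReal_mono (measure_ne_top μ _) (measure_mono Ioi_subset_Ici_self)
  have hSanti : Antitone S := fun a b hab => by
    rw [hS, hS]
    exact ENNReal.toReal_mono (measure_ne_top μ _) (measure_mono (Ioi_subset_Ioi hab))
  have hSmanti : Antitone Sm := fun a b hab => by
    rw [hSm, hSm]
    exact ENNReal.toReal_mono (measure_ne_top μ _) (measure_mono (Ici_subset_Ici.mpr hab))
  have hSmeas : Measurable S := hSanti.measurable
  have hSmmeas : Measurable Sm := hSmanti.measurable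
  have hdiv1 : ∀ x, S x / Sm x ≤ 1 := by
    intro x
    rcases eq_or_lt_of_le (hSm0 x) with h | h
    · simp [← h]
    · exact div_le_one h |>.mpr (hSle x)
  have hdiv0 : ∀ x, 0 ≤ S x / Sm x := fun x => div_nonneg (hS0 x) (hSm0 x)
  -- g integrable
  have hgL2 : MemLp g 2 μ := (memLp_two_iff_integrable_sq hg.aestronglyMeasurable).mpr hg2
  have hgi : Integrable g μ := hgL2.integrable one_le_two
  -- truncations
  set gn : ℕ → ℝ → ℝ := fun n s => min (g s) n with hgn_def
  have hgn_meas : ∀ n, Measurable (gn n) := fun n => hg.min measurable_const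
  have hgn0 : ∀ n s, 0 ≤ gn n s := fun n s => le_min (hg0 s) (Nat.cast_nonneg n)
  have hgn_le_g : ∀ n s, gn n s ≤ g s := fun n s => min_le_left _ _
  have hgn_le_n : ∀ n s, gn n s ≤ n := fun n s => min_le_right _ _
  have hgn_int : ∀ n, Integrable (gn n) μ :=
    fun n => hgi.mono (hgn_meas n).aestronglyMeasurable (ae_of_all _ fun s => by
      rw [Real.norm_eq_abs, Real.norm_eq_abs, abs_of_nonneg (hgn0 n s), abs_of_nonneg (hg0 s)]
      exact hgn_le_g n s)
  have hgnL2 : ∀ n, MemLp (gn n) 2 μ := fun n =>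
    MemLp.of_bound (hgn_meas n).aestronglyMeasurable n (ae_of_all _ fun s => by
      rw [Real.norm_eq_abs, abs_of_nonneg (hgn0 n s)]; exact hgn_le_n n s)
  have hgn2_int : ∀ n, Integrable (fun s => gn n s ^ 2) μ := fun n =>
    hg2.mono ((hgn_meas n).pow_const 2).aestronglyMeasurable (ae_of_all _ fun s => by
      rw [Real.norm_eq_abs, Real.norm_eq_abs, abs_of_nonneg (by positivity),
        abs_of_nonneg (by positivity)]
      exact pow_le_pow_left₀ (hgn0 n s) (hgn_le_g n s) 2)
  have hgn2_le : ∀ n, ∫ s, gn n s ^ 2 ∂μ ≤ ∫ s, g s ^ 2 ∂μ := fun n =>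
    integral_mono (hgn2_int n) hg2 (fun s => pow_le_pow_left₀ (hgn0 n s) (hgn_le_g n s) 2)
  -- φn
  set φ : ℝ → ℝ := fun x => (S x / Sm x) * ((1 / S x) * ∫ s in Ioi x, g s ∂μ) ^ 2 with hφ_def
  set φn : ℕ → ℝ → ℝ :=
    fun n x => (S x / Sm x) * ((1 / S x) * ∫ s in Ioi x, gn n s ∂μ) ^ 2 with hφn_def
  have hφn_meas : ∀ n, Measurable (φn n) := fun n =>
    ((hSmeas.div hSmmeas).mul
      (((measurable_const.div hSmeas).mul (aux_meas_int μ (hgn_meas n))).pow_const 2))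
  have hφn_nonneg : ∀ n x, 0 ≤ φn n x := fun n x =>
    mul_nonneg (hdiv0 x) (sq_nonneg _)
  have hinner_le : ∀ n x, (1 / S x) * ∫ s in Ioi x, gn n s ∂μ ≤ n := by
    intro n x
    have h1 : ∫ s in Ioi x, gn n s ∂μ ≤ S x * n := by
      have h2 : ∫ s in Ioi x, gn n s ∂μ ≤ ∫ _ in Ioi x, (n:ℝ) ∂μ :=
        setIntegral_mono_on ((hgn_int n).integrableOn)
          (integrableOn_const (measure_ne_top μ _)) measurableSet_Ioi
          (fun s _ => hgn_le_n n s)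
      rw [setIntegral_const, smul_eq_mul, measureReal_def, ← hS x] at h2; exact h2
    rcases eq_or_lt_of_le (hS0 x) with h | h
    · rw [← h]; simp [Nat.cast_nonneg]
    · calc (1 / S x) * ∫ s in Ioi x, gn n s ∂μ ≤ (1 / S x) * (S x * n) := by
            exact mul_le_mul_of_nonneg_left h1 (one_div_nonneg.mpr (hS0 x))
        _ = n := by field_simp
  have hinner_0 : ∀ n x, 0 ≤ (1 / S x) * ∫ s in Ioi x, gn n s ∂μ := fun n x =>
    mul_nonneg (one_div_nonneg.mpr (hS0 x)) (setIntegral_nonneg measurableSet_Ioi (fun s _ => hgn0 n s))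
  have hφn_bound : ∀ n x, φn n x ≤ (n:ℝ) ^ 2 := by
    intro n x
    calc φn n x ≤ 1 * ((n:ℝ) ^ 2) := by
          exact mul_le_mul (hdiv1 x) (pow_le_pow_left₀ (hinner_0 n x) (hinner_le n x) 2)
            (sq_nonneg _) zero_le_one
      _ = (n:ℝ) ^ 2 := one_mul _
  have hφn_int : ∀ n, Integrable (φn n) μ := fun n =>
    ⟨(hφn_meas n).aestronglyMeasurable, HasFiniteIntegral.of_bounded (C := (n:ℝ)^2)
      (ae_of_all _ fun x => by
        rw [Real.norm_eq_abs, abs_of_nonneg (hφn_nonneg n x)]; exact hφn_bound n x)⟩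
  have key_n : ∀ n, ∫⁻ x, ENNReal.ofReal (φn n x) ∂μ ≤ ENNReal.ofReal (4 * ∫ s, g s ^ 2 ∂μ) := by
    intro n
    rw [← ofReal_integral_eq_lintegral_ofReal (hφn_int n) (ae_of_all _ (hφn_nonneg n))]
    refine ENNReal.ofReal_le_ofReal ((hR (gn n) (hgnL2 n)).trans ?_)
    have := hgn2_le n
    linarith
  -- pointwise convergence φn → φ
  have hlim : ∀ x, Tendsto (fun n => φn n x) atTop (nhds (φ x)) := by
    intro x
    have hinner : Tendsto (fun n => ∫ s in Ioi x, gn n s ∂μ) atTop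
        (nhds (∫ s in Ioi x, g s ∂μ)) := by
      refine tendsto_integral_of_dominated_convergence g
        (fun n => (hgn_meas n).aestronglyMeasurable.restrict) hgi.integrableOn
        (fun n => ae_of_all _ fun s => ?_) (ae_of_all _ fun s => ?_)
      · rw [Real.norm_eq_abs, abs_of_nonneg (hgn0 n s)]; exact hgn_le_g n s
      · refine tendsto_atTop_of_eventually_const (i₀ := ⌈g s⌉₊) fun n hn => ?_
        exact min_eq_left ((Nat.le_ceil (g s)).trans (Nat.cast_le.mpr hn))
    exact ((hinner.const_mul (1 / S x)).pow 2).const_mul (S x / Sm x)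
  -- conclude via Fatou
  have heq : ∀ x, ENNReal.ofReal (φ x)
      = liminf (fun n => ENNReal.ofReal (φn n x)) atTop := by
    intro x
    exact ((ENNReal.continuous_ofReal.tendsto _).comp (hlim x)).liminf_eq.symm
  calc ∫⁻ x, ENNReal.ofReal (φ x) ∂μ
      = ∫⁻ x, liminf (fun n => ENNReal.ofReal (φn n x)) atTop ∂μ := lintegral_congr heq
    _ ≤ liminf (fun n => ∫⁻ x, ENNReal.ofReal (φn n x) ∂μ) atTop :=
        lintegral_liminf_le (fun n => ENNReal.measurable_ofReal.comp (hφn_meas n))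
    _ ≤ liminf (fun _ : ℕ => ENNReal.ofReal (4 * ∫ s, g s ^ 2 ∂μ)) atTop :=
        Filter.liminf_le_liminf (Filter.Eventually.of_forall key_n)
    _ = ENNReal.ofReal (4 * ∫ s, g s ^ 2 ∂μ) := liminf_const _


set_option maxHeartbeats 1000000 in
/-- Weighted bound for the backward operator applied in the first coordinate:
`∫∫ (R₁K)(x,y)² S(x)/((1−H(x−))(1−G(y−))) ≤ 4 ∫∫ K(x,y)²/((1−G(x−))(1−G(y−))) < ∞`.
Here `μ` is the law `F` of the survival times, `S x = μ(x,∞)`, `Sm x = μ[x,∞) = S(x−)`,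
`w x` stands for `1 − G(x−)`, and `1 − H(x−) = S(x−)·(1−G(x−)) = Sm x * w x`. -/
theorem stmt_18 (μ : Measure ℝ) [IsProbabilityMeasure μ]
    (S Sm : ℝ → ℝ) (hS : ∀ x, S x = (μ (Ioi x)).toReal)
    (hSm : ∀ x, Sm x = (μ (Ici x)).toReal)
    (w : ℝ → ℝ) (hw_pos : ∀ x, 0 < w x) (hw_le : ∀ x, w x ≤ 1) (hw_anti : Antitone w)
    (K : ℝ → ℝ → ℝ) (hsymm : ∀ x y, K x y = K y x)
    (hKmeas : Measurable fun p : ℝ × ℝ => K p.1 p.2)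
    (hKint : Integrable (fun p : ℝ × ℝ => K p.1 p.2 ^ 2 / (w p.1 * w p.2)) (μ.prod μ))
    (hR : ∀ g : ℝ → ℝ, MemLp g 2 μ →
      ∫ x, (S x / Sm x) * ((1 / S x) * ∫ s in Ioi x, g s ∂μ) ^ 2 ∂μ
        ≤ 4 * ∫ x, g x ^ 2 ∂μ) :
    (∫ x, ∫ y, ((1 / S x) * ∫ s in Ioi x, K s y ∂μ) ^ 2 * S x / (Sm x * w x * w y) ∂μ ∂μ)
      ≤ 4 * ∫ x, ∫ y, K x y ^ 2 / (w x * w y) ∂μ ∂μ := by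
  have hS0 : ∀ x, 0 ≤ S x := fun x => by rw [hS]; exact ENNReal.toReal_nonneg
  have hSm0 : ∀ x, 0 ≤ Sm x := fun x => by rw [hSm]; exact ENNReal.toReal_nonneg
  have hSanti : Antitone S := fun a b hab => by
    rw [hS, hS]
    exact ENNReal.toReal_mono (measure_ne_top μ _) (measure_mono (Ioi_subset_Ioi hab))
  have hSmanti : Antitone Sm := fun a b hab => by
    rw [hSm, hSm]
    exact ENNReal.toReal_mono (measure_ne_top μ _) (measure_mono (Ici_subset_Ici.mpr hab))
  have hSmeas : Measurable S := hSanti.measurable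
  have hSmmeas : Measurable Sm := hSmanti.measurable
  have hwmeas : Measurable w := hw_anti.measurable
  set f : ℝ → ℝ → ℝ :=
    fun x y => ((1 / S x) * ∫ s in Ioi x, K s y ∂μ) ^ 2 * S x / (Sm x * w x * w y) with hf_def
  have hf_nonneg : ∀ x y, 0 ≤ f x y := fun x y =>
    div_nonneg (mul_nonneg (sq_nonneg _) (hS0 x))
      (mul_nonneg (mul_nonneg (hSm0 x) (hw_pos x).le) (hw_pos y).le)
  have hf_meas : Measurable fun p : ℝ × ℝ => f p.1 p.2 := by
    refine Measurable.div ?_ ?_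
    · exact ((((measurable_const.div (hSmeas.comp measurable_fst)).mul
        (aux_meas_int2 μ hKmeas)).pow_const 2).mul (hSmeas.comp measurable_fst))
    · exact ((hSmmeas.comp measurable_fst).mul (hwmeas.comp measurable_fst)).mul
        (hwmeas.comp measurable_snd)
  set F : ℝ × ℝ → ENNReal := fun p => ENNReal.ofReal (f p.1 p.2) with hF_def
  have hF_meas : Measurable F := ENNReal.measurable_ofReal.comp hf_meas
  have hKsec : ∀ y, Measurable fun s => K s y := fun y =>
    hKmeas.comp (measurable_id.prodMk measurable_const)
  -- a.e. in y bound
  have hy_bound : ∀ᵐ y ∂μ, ∫⁻ x, F (x, y) ∂μ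
      ≤ ENNReal.ofReal (4 * ∫ x, K x y ^ 2 / (w x * w y) ∂μ) := by
    filter_upwards [hKint.prod_left_ae] with y hy
    set g : ℝ → ℝ := fun s => |K s y| / Real.sqrt (w s) with hg_def
    have hg_meas : Measurable g :=
      (hKsec y).abs.div (Real.continuous_sqrt.measurable.comp hwmeas)
    have hg0 : ∀ s, 0 ≤ g s := fun s => div_nonneg (abs_nonneg _) (Real.sqrt_nonneg _)
    have hgsq : ∀ s, g s ^ 2 = K s y ^ 2 / w s := fun s => by
      rw [hg_def]; simp only
      rw [div_pow, sq_abs, Real.sq_sqrt (hw_pos s).le]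
    have hg2_int : Integrable (fun s => g s ^ 2) μ := by
      refine (hy.const_mul (w y)).congr (ae_of_all _ fun s => ?_)
      show w y * (K s y ^ 2 / (w s * w y)) = g s ^ 2
      rw [hgsq s]
      have h1 := (hw_pos s).ne'
      have h2 := (hw_pos y).ne'
      field_simp
    have key := trunc_bound μ S Sm hS hSm hR g hg_meas hg0 hg2_int
    have hgi : Integrable g μ :=
      ((memLp_two_iff_integrable_sq hg_meas.aestronglyMeasurable).mpr hg2_int).integrable
        one_le_two
    have hKg : ∀ s, |K s y| = g s * Real.sqrt (w s) := fun s => by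
      rw [hg_def]; simp only
      rw [div_mul_cancel₀]
      exact (Real.sqrt_pos.mpr (hw_pos s)).ne'
    have hKabs_int : Integrable (fun s => |K s y|) μ := by
      refine hgi.mono (hKsec y).abs.aestronglyMeasurable (ae_of_all _ fun s => ?_)
      rw [Real.norm_eq_abs, abs_abs, Real.norm_eq_abs, abs_of_nonneg (hg0 s), hKg s]
      calc g s * Real.sqrt (w s) ≤ g s * 1 :=
            mul_le_mul_of_nonneg_left (Real.sqrt_le_one.mpr (hw_le s)) (hg0 s)
        _ = g s := mul_one _
    -- pointwise bound
    have hpt : ∀ x, f x y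
        ≤ ((S x / Sm x) * ((1 / S x) * ∫ s in Ioi x, g s ∂μ) ^ 2) * (w y)⁻¹ := by
      intro x
      set A := ∫ s in Ioi x, K s y ∂μ with hA_def
      set B := ∫ s in Ioi x, g s ∂μ with hB_def
      have hB0 : 0 ≤ B := setIntegral_nonneg measurableSet_Ioi fun s _ => hg0 s
      have hA : |A| ≤ Real.sqrt (w x) * B := by
        calc |A| ≤ ∫ s in Ioi x, |K s y| ∂μ := by
              rw [hA_def]
              simpa [Real.norm_eq_abs] using
                norm_integral_le_integral_norm (μ := μ.restrict (Ioi x)) (fun s => K s y)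
          _ ≤ ∫ s in Ioi x, Real.sqrt (w x) * g s ∂μ := by
              refine setIntegral_mono_on hKabs_int.integrableOn
                ((hgi.const_mul _).integrableOn) measurableSet_Ioi fun s hs => ?_
              rw [hKg s]
              calc g s * Real.sqrt (w s) ≤ g s * Real.sqrt (w x) :=
                    mul_le_mul_of_nonneg_left
                      (Real.sqrt_le_sqrt (hw_anti (le_of_lt hs))) (hg0 s)
                _ = Real.sqrt (w x) * g s := mul_comm _ _
          _ = Real.sqrt (w x) * B := by rw [hB_def, integral_const_mul]
      have hA2 : ((1 / S x) * A) ^ 2 ≤ w x * ((1 / S x) * B) ^ 2 := by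
        have hAsq : A ^ 2 ≤ w x * B ^ 2 := by
          have h := mul_self_le_mul_self (abs_nonneg A) hA
          rw [abs_mul_abs_self] at h
          calc A ^ 2 = A * A := sq A
            _ ≤ (Real.sqrt (w x) * B) * (Real.sqrt (w x) * B) := h
            _ = (Real.sqrt (w x) * Real.sqrt (w x)) * (B * B) := by ring
            _ = w x * B ^ 2 := by rw [Real.mul_self_sqrt (hw_pos x).le]; ring
        calc ((1 / S x) * A) ^ 2 = (1 / S x) ^ 2 * A ^ 2 := by ring
          _ ≤ (1 / S x) ^ 2 * (w x * B ^ 2) :=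
              mul_le_mul_of_nonneg_left hAsq (sq_nonneg _)
          _ = w x * ((1 / S x) * B) ^ 2 := by ring
      have hD : 0 ≤ Sm x * w x * w y :=
        mul_nonneg (mul_nonneg (hSm0 x) (hw_pos x).le) (hw_pos y).le
      have step : f x y ≤ (w x * ((1 / S x) * B) ^ 2) * S x / (Sm x * w x * w y) :=
        aux_div_le_div (mul_le_mul_of_nonneg_right hA2 (hS0 x)) hD
      refine step.trans (le_of_eq ?_)
      have hwx := (hw_pos x).ne'
      have hwy := (hw_pos y).ne'
      generalize ((1 / S x) * B) ^ 2 = Q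
      by_cases hSmx : Sm x = 0
      · rw [hSmx]; simp
      · field_simp
    -- integrate the pointwise bound
    have hφ_meas : Measurable fun x =>
        (S x / Sm x) * ((1 / S x) * ∫ s in Ioi x, g s ∂μ) ^ 2 :=
      (hSmeas.div hSmmeas).mul
        (((measurable_const.div hSmeas).mul (aux_meas_int μ hg_meas)).pow_const 2)
    have hg2_0 : (0:ℝ) ≤ 4 * ∫ s, g s ^ 2 ∂μ :=
      mul_nonneg (by norm_num) (integral_nonneg fun s => sq_nonneg _)
    calc ∫⁻ x, F (x, y) ∂μ
        ≤ ∫⁻ x, ENNReal.ofReal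
            (((S x / Sm x) * ((1 / S x) * ∫ s in Ioi x, g s ∂μ) ^ 2) * (w y)⁻¹) ∂μ :=
          lintegral_mono fun x => ENNReal.ofReal_le_ofReal (hpt x)
      _ = ∫⁻ x, ENNReal.ofReal
            ((S x / Sm x) * ((1 / S x) * ∫ s in Ioi x, g s ∂μ) ^ 2)
            * ENNReal.ofReal ((w y)⁻¹) ∂μ := by
          refine lintegral_congr fun x => ?_
          rw [ENNReal.ofReal_mul (mul_nonneg (div_nonneg (hS0 x) (hSm0 x)) (sq_nonneg _))]
      _ = (∫⁻ x, ENNReal.ofReal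
            ((S x / Sm x) * ((1 / S x) * ∫ s in Ioi x, g s ∂μ) ^ 2) ∂μ)
            * ENNReal.ofReal ((w y)⁻¹) :=
          lintegral_mul_const _ (ENNReal.measurable_ofReal.comp hφ_meas)
      _ ≤ ENNReal.ofReal (4 * ∫ s, g s ^ 2 ∂μ) * ENNReal.ofReal ((w y)⁻¹) :=
          mul_le_mul_left key _
      _ = ENNReal.ofReal ((4 * ∫ s, g s ^ 2 ∂μ) * (w y)⁻¹) :=
          (ENNReal.ofReal_mul hg2_0).symm
      _ = ENNReal.ofReal (4 * ∫ x, K x y ^ 2 / (w x * w y) ∂μ) := by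
          congr 1
          have heq : ∫ x, K x y ^ 2 / (w x * w y) ∂μ = (∫ s, g s ^ 2 ∂μ) * (w y)⁻¹ := by
            rw [← integral_mul_const]
            refine integral_congr_ae (ae_of_all _ fun s => ?_)
            show K s y ^ 2 / (w s * w y) = g s ^ 2 * (w y)⁻¹
            rw [hgsq s]; ring
          rw [heq]; ring
  -- integrability of the y-integral function
  have hRHS_int : Integrable (fun y => ∫ x, K x y ^ 2 / (w x * w y) ∂μ) μ := by
    exact hKint.integral_prod_right
  -- product bound
  have hprod_bound : ∫⁻ p, F p ∂(μ.prod μ)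
      ≤ ENNReal.ofReal (4 * ∫ y, ∫ x, K x y ^ 2 / (w x * w y) ∂μ ∂μ) := by
    rw [lintegral_prod_symm F hF_meas.aemeasurable]
    calc ∫⁻ y, ∫⁻ x, F (x, y) ∂μ ∂μ
        ≤ ∫⁻ y, ENNReal.ofReal (4 * ∫ x, K x y ^ 2 / (w x * w y) ∂μ) ∂μ :=
          lintegral_mono_ae hy_bound
      _ = ENNReal.ofReal (∫ y, 4 * ∫ x, K x y ^ 2 / (w x * w y) ∂μ ∂μ) :=
          (ofReal_integral_eq_lintegral_ofReal (hRHS_int.const_mul 4)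
            (ae_of_all _ fun y => mul_nonneg (by norm_num)
              (integral_nonneg fun x => div_nonneg (sq_nonneg _)
                (mul_nonneg (hw_pos x).le (hw_pos y).le)))).symm
      _ = ENNReal.ofReal (4 * ∫ y, ∫ x, K x y ^ 2 / (w x * w y) ∂μ ∂μ) := by
          rw [integral_const_mul]
  have hf_int : Integrable (fun p : ℝ × ℝ => f p.1 p.2) (μ.prod μ) := by
    refine ⟨hf_meas.aestronglyMeasurable, ?_⟩
    refine (hasFiniteIntegral_iff_ofReal
      (ae_of_all _ fun p : ℝ × ℝ => hf_nonneg p.1 p.2)).mpr ?_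
    exact lt_of_le_of_lt hprod_bound ENNReal.ofReal_lt_top
  have hswap : ∫ y, ∫ x, K x y ^ 2 / (w x * w y) ∂μ ∂μ
      = ∫ x, ∫ y, K x y ^ 2 / (w x * w y) ∂μ ∂μ := by
    exact (integral_integral_swap (f := fun x y => K x y ^ 2 / (w x * w y)) hKint).symm
  have hRHS0 : (0:ℝ) ≤ 4 * ∫ y, ∫ x, K x y ^ 2 / (w x * w y) ∂μ ∂μ :=
    mul_nonneg (by norm_num) (integral_nonneg fun y => integral_nonneg fun x =>
      div_nonneg (sq_nonneg _) (mul_nonneg (hw_pos x).le (hw_pos y).le))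
  calc ∫ x, ∫ y, f x y ∂μ ∂μ = ∫ p, f p.1 p.2 ∂(μ.prod μ) := integral_integral hf_int
    _ = (∫⁻ p, F p ∂(μ.prod μ)).toReal :=
        integral_eq_lintegral_of_nonneg_ae (ae_of_all _ fun p => hf_nonneg p.1 p.2)
          hf_meas.aestronglyMeasurable
    _ ≤ (ENNReal.ofReal (4 * ∫ y, ∫ x, K x y ^ 2 / (w x * w y) ∂μ ∂μ)).toReal :=
        ENNReal.toReal_mono ENNReal.ofReal_ne_top hprod_bound
    _ = 4 * ∫ y, ∫ x, K x y ^ 2 / (w x * w y) ∂μ ∂μ := ENNReal.toReal_ofReal hRHS0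
    _ = 4 * ∫ x, ∫ y, K x y ^ 2 / (w x * w y) ∂μ ∂μ := by rw [hswap]
end
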